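/- Let m ≥ 2 and let C_{k,n} be the coefficients in the expansion p_{λ,k}(x) = Σ_n λ^{k-n} x^{(m-1)k-nm} C_{k,n} of the polynomials from differentiation of e^{λ x^m/m}. Then for k ≥ 2 and 1 ≤ n ≤ ⌊k(m-1)/m⌋ one has C_{k+1,n} = C_{k,n} + C_{k,n-1}((m-1)k - m(n-1)); moreover if m does not divide k and n = ⌊(k+1)(m-1)/m⌋ then C_{k+1,n} = C_{k,n-1}((m-1)k - m(n-1)). -/

import Mathlib

open Polynomial in
lemma key_coeff (m : ℕ) (hm : 2 ≤ m) (lam : ℂ)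
    (p : ℕ → Polynomial ℂ)
    (hprec : ∀ k, p (k + 1) =
      Polynomial.C lam * Polynomial.X ^ (m - 1) * p k + Polynomial.derivative (p k))
    (C : ℕ → ℕ → ℕ)
    (hC : ∀ k : ℕ, 1 ≤ k →
      p k = ∑ n ∈ Finset.range (k * (m - 1) / m + 1),
        Polynomial.C (lam ^ (k - n) * (C k n : ℂ)) * Polynomial.X ^ ((m - 1) * k - n * m))
    (k n : ℕ) (hk : 1 ≤ k) (h1 : 1 ≤ n) (h2 : n ≤ (k+1) * (m-1) / m) :
    lam ^ (k + 1 - n) * (C (k+1) n : ℂ)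
      = (if n ≤ k * (m-1) / m then lam ^ (k + 1 - n) * (C k n : ℂ) else 0)
        + lam ^ (k + 1 - n) * ((C k (n-1) : ℂ) * (((m-1) * k - (n-1) * m : ℕ) : ℂ)) := by
  have hm0 : 0 < m := by omega
  have hrec := hprec k
  rw [hC k hk, hC (k+1) (by omega)] at hrec
  set K1 := k * (m-1) / m with hK1def
  set K2 := (k+1) * (m-1) / m with hK2def
  have e1 : (m-1)*k = k*(m-1) := by ring
  have e2 : (m-1)*(k+1) = k*(m-1) + (m-1) := by ring
  have e3 : (k+1)*(m-1) = k*(m-1) + (m-1) := by ring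
  have hK1m : K1 * m ≤ k * (m-1) := Nat.div_mul_le_self _ _
  have hK2m : K2 * m ≤ (k+1) * (m-1) := Nat.div_mul_le_self _ _
  have hK1k : K1 ≤ k := by
    have h : k*(m-1) ≤ k*m := Nat.mul_le_mul_left k (Nat.sub_le m 1)
    calc K1 ≤ k*m/m := Nat.div_le_div_right h
      _ = k := Nat.mul_div_cancel k hm0
  have hK2K1 : K2 ≤ K1 + 1 := by
    calc K2 ≤ (k*(m-1)+m)/m := Nat.div_le_div_right (by omega)
      _ = K1 + 1 := Nat.add_div_right _ hm0
  have hnm : n * m ≤ (k+1)*(m-1) := le_trans (Nat.mul_le_mul_right m h2) hK2m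
  have hsplit : n * m = (n-1) * m + m := by
    have hn' : (n - 1) + 1 = n := by omega
    calc n * m = ((n-1)+1) * m := by rw [hn']
      _ = (n-1)*m + m := by ring
  have hco := congrArg (fun q => Polynomial.coeff q ((m-1)*(k+1) - n*m)) hrec
  simp only [Finset.mul_sum, derivative_sum, Polynomial.coeff_add,
    Polynomial.finset_sum_coeff] at hco
  -- LHS
  have L : ∑ j ∈ Finset.range (K2 + 1),
      (Polynomial.C (lam ^ (k+1-j) * ((C (k+1) j : ℕ) : ℂ)) *
        Polynomial.X ^ ((m-1)*(k+1) - j*m)).coeff ((m-1)*(k+1) - n*m)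
      = lam ^ (k+1-n) * (C (k+1) n : ℂ) := by
    rw [Finset.sum_eq_single n]
    · rw [Polynomial.coeff_C_mul, Polynomial.coeff_X_pow, if_pos rfl, mul_one]
    · intro j hj hjn
      simp only [Finset.mem_range] at hj
      have hjm : j * m ≤ (k+1)*(m-1) := le_trans (Nat.mul_le_mul_right m (by omega)) hK2m
      rw [Polynomial.coeff_C_mul, Polynomial.coeff_X_pow, if_neg, mul_zero]
      intro h
      exact hjn (Nat.eq_of_mul_eq_mul_right hm0 (by omega : j * m = n * m))
    · intro h
      exact absurd (Finset.mem_range.mpr (by omega)) h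
  -- first RHS sum
  have A : ∑ j ∈ Finset.range (K1 + 1),
      (Polynomial.C lam * Polynomial.X ^ (m-1) *
        (Polynomial.C (lam ^ (k-j) * ((C k j : ℕ) : ℂ)) *
          Polynomial.X ^ ((m-1)*k - j*m))).coeff ((m-1)*(k+1) - n*m)
      = (if n ≤ K1 then lam ^ (k + 1 - n) * (C k n : ℂ) else 0) := by
    have hterm : ∀ j, j ≤ K1 →
        Polynomial.C lam * Polynomial.X ^ (m-1) *
          (Polynomial.C (lam ^ (k-j) * ((C k j : ℕ) : ℂ)) *
            Polynomial.X ^ ((m-1)*k - j*m))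
        = Polynomial.C (lam ^ (k+1-j) * ((C k j : ℕ) : ℂ)) *
            Polynomial.X ^ ((m-1)*(k+1) - j*m) := by
      intro j hj
      have hjm : j * m ≤ k*(m-1) := le_trans (Nat.mul_le_mul_right m hj) hK1m
      have hjk : j ≤ k := le_trans hj hK1k
      have hexp : (m-1)*(k+1) - j*m = ((m-1)*k - j*m) + (m-1) := by omega
      have hpow : lam ^ (k+1-j) = lam * lam ^ (k-j) := by
        rw [← pow_succ']
        congr 1
        omega
      rw [hexp, hpow, pow_add]
      simp only [map_mul]
      ring
    rw [Finset.sum_congr rfl (fun j hj => by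
      rw [hterm j (Nat.lt_succ_iff.mp (Finset.mem_range.mp hj))])]
    by_cases hn : n ≤ K1
    · rw [if_pos hn, Finset.sum_eq_single n]
      · rw [Polynomial.coeff_C_mul, Polynomial.coeff_X_pow, if_pos rfl, mul_one]
      · intro j hj hjn
        simp only [Finset.mem_range] at hj
        have hjm : j * m ≤ k*(m-1) :=
          le_trans (Nat.mul_le_mul_right m (by omega)) hK1m
        rw [Polynomial.coeff_C_mul, Polynomial.coeff_X_pow, if_neg, mul_zero]
        intro h
        exact hjn (Nat.eq_of_mul_eq_mul_right hm0 (by omega : j * m = n * m))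
      · intro h
        exact absurd (Finset.mem_range.mpr (by omega)) h
    · rw [if_neg hn]
      apply Finset.sum_eq_zero
      intro j hj
      simp only [Finset.mem_range] at hj
      have hjm : j * m ≤ k*(m-1) :=
        le_trans (Nat.mul_le_mul_right m (by omega)) hK1m
      rw [Polynomial.coeff_C_mul, Polynomial.coeff_X_pow, if_neg, mul_zero]
      intro h
      have : j = n := Nat.eq_of_mul_eq_mul_right hm0 (by omega : j * m = n * m)
      omega
  -- second RHS sum (derivative)
  have B : ∑ j ∈ Finset.range (K1 + 1),
      (Polynomial.derivative
        (Polynomial.C (lam ^ (k-j) * ((C k j : ℕ) : ℂ)) *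
          Polynomial.X ^ ((m-1)*k - j*m))).coeff ((m-1)*(k+1) - n*m)
      = lam ^ (k + 1 - n) * ((C k (n-1) : ℂ) * (((m-1) * k - (n-1) * m : ℕ) : ℂ)) := by
    have hterm : ∀ (j : ℕ),
        Polynomial.derivative
          (Polynomial.C (lam ^ (k-j) * ((C k j : ℕ) : ℂ)) *
            Polynomial.X ^ ((m-1)*k - j*m))
        = Polynomial.C (lam ^ (k-j) * ((C k j : ℕ) : ℂ) * (((m-1)*k - j*m : ℕ) : ℂ)) *
            Polynomial.X ^ (((m-1)*k - j*m) - 1) := by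
      intro j
      rw [Polynomial.derivative_C_mul, Polynomial.derivative_X_pow]
      simp only [map_mul]
      ring
    rw [Finset.sum_congr rfl (fun j _ => by rw [hterm j])]
    have hn1 : n - 1 ≤ K1 := by omega
    have hn1m : (n-1) * m ≤ k*(m-1) := le_trans (Nat.mul_le_mul_right m hn1) hK1m
    have hn1k : n - 1 ≤ k := le_trans hn1 hK1k
    rw [Finset.sum_eq_single (n-1)]
    · rw [Polynomial.coeff_C_mul, Polynomial.coeff_X_pow]
      by_cases hE : (m-1)*k - (n-1)*m = 0
      · simp only [hE, Nat.cast_zero, mul_zero, zero_mul]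
      · have hcond : (m-1)*(k+1) - n*m = ((m-1)*k - (n-1)*m) - 1 := by omega
        rw [if_pos hcond, mul_one]
        have hkn : k - (n-1) = k + 1 - n := by omega
        rw [hkn]
        ring
    · intro j hj hjn
      simp only [Finset.mem_range] at hj
      have hjm : j * m ≤ k*(m-1) := le_trans (Nat.mul_le_mul_right m (by omega)) hK1m
      rw [Polynomial.coeff_C_mul, Polynomial.coeff_X_pow]
      by_cases hE : (m-1)*k - j*m = 0
      · simp [hE]
      · rw [if_neg, mul_zero]
        intro h
        have hjm' : j * m = (n-1) * m := by omega
        exact hjn (Nat.eq_of_mul_eq_mul_right hm0 hjm')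
    · intro h
      exact absurd (Finset.mem_range.mpr (by omega)) h
  rw [L, A, B] at hco
  exact hco

theorem coefficient_recursion (m : ℕ) (hm : 2 ≤ m) (lam : ℂ) (hlam : lam ≠ 0)
    (p : ℕ → Polynomial ℂ) (hp0 : p 0 = 1)
    (hprec : ∀ k, p (k + 1) =
      Polynomial.C lam * Polynomial.X ^ (m - 1) * p k + Polynomial.derivative (p k))
    (C : ℕ → ℕ → ℕ)
    (hC : ∀ k : ℕ, 1 ≤ k →
      p k = ∑ n ∈ Finset.range (k * (m - 1) / m + 1),
        Polynomial.C (lam ^ (k - n) * (C k n : ℂ)) * Polynomial.X ^ ((m - 1) * k - n * m)) :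
    ∀ k : ℕ, 2 ≤ k →
      (∀ n : ℕ, 1 ≤ n → n ≤ k * (m - 1) / m →
        C (k + 1) n = C k n + C k (n - 1) * ((m - 1) * k - m * (n - 1))) ∧
      (¬ m ∣ k →
        C (k + 1) ((k + 1) * (m - 1) / m)
          = C k ((k + 1) * (m - 1) / m - 1)
            * ((m - 1) * k - m * ((k + 1) * (m - 1) / m - 1))) := by
  intro k hk
  have hm0 : 0 < m := by omega
  have hK12 : k * (m-1) / m ≤ (k+1) * (m-1) / m :=
    Nat.div_le_div_right (Nat.mul_le_mul_right _ (by omega))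
  constructor
  · intro n h1 h2
    have hkey := key_coeff m hm lam p hprec C hC k n (by omega) h1 (le_trans h2 hK12)
    rw [if_pos h2, ← mul_add] at hkey
    have h := mul_left_cancel₀ (pow_ne_zero (k+1-n) hlam) hkey
    rw [mul_comm m (n-1)]
    exact_mod_cast h
  · intro hdvd
    have hcop : Nat.Coprime m (m-1) :=
      (Nat.coprime_self_sub_right (by omega)).mpr (Nat.coprime_one_right m)
    have hndvd : ¬ m ∣ k * (m-1) := fun h => hdvd (hcop.dvd_of_dvd_mul_right h)
    have hr0 : k*(m-1) % m ≠ 0 := fun h => hndvd (Nat.dvd_of_mod_eq_zero h)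
    obtain ⟨q, r, hrlt, hr, hkeq, hdivq⟩ :
        ∃ q r, r < m ∧ r ≠ 0 ∧ k*(m-1) = m*q + r ∧ k*(m-1)/m = q :=
      ⟨k*(m-1)/m, k*(m-1)%m, Nat.mod_lt _ hm0, hr0, (Nat.div_add_mod _ _).symm, rfl⟩
    have hK : (k+1)*(m-1)/m = q + 1 := by
      have hmq : m*(q+1) = m*q + m := by ring
      have e3 : (k+1)*(m-1) = k*(m-1) + (m-1) := by ring
      have h4 : (k+1)*(m-1) = m*(q+1) + (r-1) := by omega
      rw [h4, Nat.mul_add_div hm0, Nat.div_eq_of_lt (by omega), add_zero]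
    have hkey := key_coeff m hm lam p hprec C hC k (q + 1) (by omega) (by omega)
      (by omega)
    rw [if_neg (by omega), Nat.add_sub_cancel, zero_add] at hkey
    have h := mul_left_cancel₀ (pow_ne_zero _ hlam) hkey
    rw [hK, Nat.add_sub_cancel, mul_comm m q, ← hdivq] at *
    exact_mod_cast h
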